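/- Let Σ = {A, B} be a pair of n×n real matrices that are both idempotent (A·A = A and B·B = B) and let a ∈ ℝ^n. Then for every integer k ≥ 1, the set X_k(Σ, a) has at most 2k elements. -/
import Mathlib


open Matrix Set

noncomputable section

/-- `XSeq S a k` is the set of all vectors `T_{k-1} ⋯ T_0 · a` with each `T_j ∈ S`
(and `XSeq S a 0 = {a}`). -/
def XSeq {n : ℕ} (S : Set (Matrix (Fin n) (Fin n) ℝ)) (a : Fin n → ℝ) : ℕ → Set (Fin n → ℝ)
  | 0 => {a}
  | k + 1 => ⋃ A ∈ S, A.mulVec '' XSeq S a k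

/-- `PHull S a k` is the convex hull of `XSeq S a k`. -/
def PHull {n : ℕ} (S : Set (Matrix (Fin n) (Fin n) ℝ)) (a : Fin n → ℝ) (k : ℕ) :
    Set (Fin n → ℝ) :=
  convexHull ℝ (XSeq S a k)

/-- `EPts S a k` is the set of extreme points of `PHull S a k`. -/
def EPts {n : ℕ} (S : Set (Matrix (Fin n) (Fin n) ℝ)) (a : Fin n → ℝ) (k : ℕ) :
    Set (Fin n → ℝ) :=
  Set.extremePoints ℝ (PHull S a k)

/-- `NExt S a k` is the number of extreme points of `PHull S a k`. -/
def NExt {n : ℕ} (S : Set (Matrix (Fin n) (Fin n) ℝ)) (a : Fin n → ℝ) (k : ℕ) : ℕ :=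
  (EPts S a k).ncard

/-- letter -/
def cmat {n : ℕ} (A B : Matrix (Fin n) (Fin n) ℝ) : Bool → Matrix (Fin n) (Fin n) ℝ
  | true => A
  | false => B

/-- alternating word of length m whose leftmost letter is `cmat A B b` -/
def Walt {n : ℕ} (A B : Matrix (Fin n) (Fin n) ℝ) : ℕ → Bool → Matrix (Fin n) (Fin n) ℝ
  | 0, _ => 1
  | m + 1, b => cmat A B b * Walt A B m (!b)

lemma cmat_idem {n : ℕ} {A B : Matrix (Fin n) (Fin n) ℝ}
    (hA : A * A = A) (hB : B * B = B) (b : Bool) :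
    cmat A B b * cmat A B b = cmat A B b := by
  cases b <;> simpa [cmat] using (by assumption)

lemma walt_absorb {n : ℕ} {A B : Matrix (Fin n) (Fin n) ℝ}
    (hA : A * A = A) (hB : B * B = B) {m : ℕ} (hm : 1 ≤ m) (b : Bool) :
    cmat A B b * Walt A B m b = Walt A B m b := by
  cases m with
  | zero => omega
  | succ m =>
    show cmat A B b * (cmat A B b * Walt A B m (!b)) = _
    rw [← Matrix.mul_assoc, cmat_idem hA hB]
    rfl

lemma xseq_subset {n : ℕ} {A B : Matrix (Fin n) (Fin n) ℝ}
    (hA : A * A = A) (hB : B * B = B) (a : Fin n → ℝ) (k : ℕ) (hk : 1 ≤ k) :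
    XSeq {A, B} a k ⊆
      ↑((Finset.Icc 1 k ×ˢ (Finset.univ : Finset Bool)).image
        fun p => (Walt A B p.1 p.2).mulVec a) := by
  induction k with
  | zero => omega
  | succ k ih =>
    intro x hx
    simp only [XSeq, Set.mem_iUnion, Set.mem_image] at hx
    obtain ⟨T, hT, y, hy, rfl⟩ := hx
    have hT' : ∃ b, T = cmat A B b := by
      rcases hT with h | h
      · exact ⟨true, h⟩
      · exact ⟨false, h⟩
    obtain ⟨b', rfl⟩ := hT'
    rcases Nat.eq_zero_or_pos k with hk0 | hk1
    · subst hk0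
      have : y = a := hy
      subst this
      simp only [Finset.coe_image, Set.mem_image, Finset.mem_coe, Finset.mem_product]
      exact ⟨(1, b'), by simp, by simp [Walt, cmat_idem]⟩
    · have := ih hk1 hy
      simp only [Finset.coe_image, Set.mem_image, Finset.mem_coe, Finset.mem_product,
        Finset.mem_Icc, Finset.mem_univ] at this ⊢
      obtain ⟨⟨m, b⟩, ⟨⟨hm1, hmk⟩, -⟩, rfl⟩ := this
      by_cases hbb : b' = b
      · subst hbb
        refine ⟨(m, b'), ⟨⟨hm1, hmk.trans (Nat.le_succ k)⟩, trivial⟩, ?_⟩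
        rw [Matrix.mulVec_mulVec, walt_absorb hA hB hm1]
      · refine ⟨(m + 1, b'), ⟨⟨by omega, by omega⟩, trivial⟩, ?_⟩
        have hb : b = !b' := by cases b <;> cases b' <;> simp_all
        subst hb
        rw [Matrix.mulVec_mulVec]
        rfl

/-- For a pair of idempotent matrices, `X_k(Σ, a)` has at most `2k` elements for `k ≥ 1`. -/
theorem stmt2 {n : ℕ} (A B : Matrix (Fin n) (Fin n) ℝ)
    (hA : A * A = A) (hB : B * B = B) (a : Fin n → ℝ) (k : ℕ) (hk : 1 ≤ k) :
    (XSeq {A, B} a k).ncard ≤ 2 * k := by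
  have hsub := xseq_subset hA hB a k hk
  set F := (Finset.Icc 1 k ×ˢ (Finset.univ : Finset Bool)).image
      fun p => (Walt A B p.1 p.2).mulVec a with hF
  calc (XSeq {A, B} a k).ncard ≤ (↑F : Set _).ncard :=
        Set.ncard_le_ncard hsub (F.finite_toSet)
    _ = F.card := Set.ncard_coe_finset F
    _ ≤ (Finset.Icc 1 k ×ˢ (Finset.univ : Finset Bool)).card := Finset.card_image_le
    _ = k * 2 := by simp [Finset.card_product, Nat.Icc_eq_range']
    _ = 2 * k := Nat.mul_comm k 2


end
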